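/- Let 2 ≤ i ≤ q and let z ∈ R_q satisfy d_j(z) = 0 for all 0 ≤ j ≤ q. Then the element δ_i(z) ∈ R_{q+i} satisfies d_j(δ_i(z)) = 0 for all 0 ≤ j ≤ q+i; that is, the explicit formula δ_i defines a map from q-cycles of the normalized (Moore) complex of R to (q+i)-cycles. -/

import Mathlib

open scoped TensorProduct

noncomputable section

/-- A (possibly degenerate) collection of data for a simplicial `F₂`-vector space:
a family of `ZMod 2`-modules together with face maps `d n j : X n → X (n-1)`
and degeneracy maps `s n j : X n → X (n+1)`.  The simplicial identities are
required via the predicate `SVS.IsSimplicial` below. -/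
structure SVS : Type 1 where
  X : ℕ → Type
  grp : ∀ n, AddCommGroup (X n)
  mod : ∀ n, Module (ZMod 2) (X n)
  d : ∀ n, ℕ → (X n →ₗ[ZMod 2] X (n - 1))
  s : ∀ n, ℕ → (X n →ₗ[ZMod 2] X (n + 1))

attribute [instance] SVS.grp SVS.mod

namespace SVS

/-- Transport along an equality of degrees. -/
def xcast (V : SVS) {m n : ℕ} (h : m = n) : V.X m →ₗ[ZMod 2] V.X n := by
  subst h; exact LinearMap.id

/-- The simplicial identities, in the (complete) ranges where both sides make sense. -/
structure IsSimplicial (V : SVS) : Prop where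
  dd : ∀ n i j, i < j → j ≤ n + 2 →
    (V.d (n+1) i).comp (V.d (n+2) j) = (V.d (n+1) (j-1)).comp (V.d (n+2) i)
  ss : ∀ n i j, i ≤ j → j ≤ n →
    (V.s (n+1) i).comp (V.s n j) = (V.s (n+1) (j+1)).comp (V.s n i)
  ds_lt : ∀ n i j, i < j → j ≤ n + 1 →
    (V.d (n+2) i).comp (V.s (n+1) j) = (V.s n (j-1)).comp (V.d (n+1) i)
  ds_eq : ∀ n i j, (i = j ∨ i = j + 1) → j ≤ n →
    (V.d (n+1) i).comp (V.s n j) = LinearMap.id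
  ds_gt : ∀ n i j, j + 1 < i → i ≤ n + 2 →
    (V.d (n+2) i).comp (V.s (n+1) j) = (V.s n j).comp (V.d (n+1) (i-1))

/-- The suspension `S(V)`, with `S(V)_n = V_{n+1}`, `d_j = d_{j+1}`, `s_j = s_{j+1}`. -/
def susp (V : SVS) : SVS where
  X := fun n => V.X (n+1)
  grp := fun n => V.grp (n+1)
  mod := fun n => V.mod (n+1)
  d := fun n => match n with
    | 0 => fun _ => 0
    | m+1 => fun j => V.d (m+2) (j+1)
  s := fun n j => V.s (n+1) (j+1)

/-- The `k`-fold suspension `S^k(V)`, with `S^k(V)_n = V_{n+k}`, `d_j = d_{j+k}`,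
`s_j = s_{j+k}`.  Evaluating a natural transformation at `shift V k` realizes its
`k`-fold suspension ("replace every `d_r` by `d_{r+k}` and every `s_r` by `s_{r+k}`"). -/
def shift (V : SVS) (k : ℕ) : SVS where
  X := fun n => V.X (n+k)
  grp := fun n => V.grp (n+k)
  mod := fun n => V.mod (n+k)
  d := fun n j =>
    if h : 1 ≤ n then (V.xcast (by omega)).comp (V.d (n+k) (j+k)) else 0
  s := fun n j => (V.xcast (by omega)).comp (V.s (n+k) (j+k))

end SVS

/-- A simplicial map (morphism of simplicial `F₂`-vector spaces). -/
structure SMap (V W : SVS) where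
  f : ∀ n, V.X n →ₗ[ZMod 2] W.X n
  comm_d : ∀ n j, j ≤ n + 1 →
    (f n).comp (V.d (n+1) j) = (W.d (n+1) j).comp (f (n+1))
  comm_s : ∀ n j, j ≤ n →
    (f (n+1)).comp (V.s n j) = (W.s n j).comp (f n)

/-- Iterated degeneracies: `sIter V [a₁, …, aᵣ] q = s_{aᵣ} ∘ ⋯ ∘ s_{a₁}` applied from degree `q`
(the head of the list is applied first). -/
def sIter (V : SVS) : (l : List ℕ) → (q : ℕ) → (V.X q →ₗ[ZMod 2] V.X (q + l.length))
  | [], _ => LinearMap.id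
  | a :: t, q =>
    (V.xcast (show q + 1 + t.length = q + (t.length + 1) by omega)).comp
      ((sIter V t (q+1)).comp (V.s q a))

/-- Iterated degeneracies, with the target degree given explicitly. -/
def sIterTo (V : SVS) (q m : ℕ) (l : List ℕ) (h : q + l.length = m) :
    V.X q →ₗ[ZMod 2] V.X m :=
  (V.xcast h).comp (sIter V l q)

/-- `V_a ⊗ W_b` over `F₂`. -/
abbrev TT (V W : SVS) (a b : ℕ) : Type :=
  TensorProduct (ZMod 2) (V.X a) (W.X b)

/-- Transport of tensor products along equalities of degrees. -/
def tcast (V W : SVS) {a b c e : ℕ} (h1 : a = c) (h2 : b = e) :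
    TT V W a b →ₗ[ZMod 2] TT V W c e :=
  TensorProduct.map (V.xcast h1) (W.xcast h2)

/-- The twist `T : V_a ⊗ W_b → W_b ⊗ V_a`. -/
def twist (V W : SVS) (a b : ℕ) : TT V W a b →ₗ[ZMod 2] TT W V b a :=
  (TensorProduct.comm (ZMod 2) _ _).toLinearMap

/-- `(i,j)`-shuffles, encoded as pairs `(μ, ν)` of subsets of `{0, …, i+j-1}` with
`μ.card = i`, `ν.card = j`, disjoint with union everything; the increasing enumeration
of a set gives the corresponding increasing sequence. -/
def shuffles (i j : ℕ) : Finset (Finset ℕ × Finset ℕ) :=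
  ((Finset.range (i+j)).powersetCard i ×ˢ (Finset.range (i+j)).powersetCard j).filter
    fun p => Disjoint p.1 p.2 ∧ p.1 ∪ p.2 = Finset.range (i+j)

lemma shuffles_card₁ {i j : ℕ} {p : Finset ℕ × Finset ℕ} (hp : p ∈ shuffles i j) :
    p.1.card = i := by
  simp only [shuffles, Finset.mem_filter, Finset.mem_product, Finset.mem_powersetCard] at hp
  exact hp.1.1.2

lemma shuffles_card₂ {i j : ℕ} {p : Finset ℕ × Finset ℕ} (hp : p ∈ shuffles i j) :
    p.2.card = j := by
  simp only [shuffles, Finset.mem_filter, Finset.mem_product, Finset.mem_powersetCard] at hp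
  exact hp.1.2.2

/-- The increasing enumeration of a finite set of naturals. -/
def sortAsc (s : Finset ℕ) : List ℕ := s.sort (· ≤ ·)

lemma length_sortAsc (s : Finset ℕ) : (sortAsc s).length = s.card :=
  Finset.length_sort _

/-- The Eilenberg–MacLane shuffle map
`D_{i,j} = Σ_{(i,j)-shuffles (μ,ν)} (s_{ν_j}⋯s_{ν_1}) ⊗ (s_{μ_i}⋯s_{μ_1}) :
V_i ⊗ W_j → V_{i+j} ⊗ W_{i+j}`. -/
def Dmap (V W : SVS) (i j : ℕ) : TT V W i j →ₗ[ZMod 2] TT V W (i+j) (i+j) :=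
  ∑ p ∈ (shuffles i j).attach,
    TensorProduct.map
      (sIterTo V i (i+j) (sortAsc p.1.2) (by rw [length_sortAsc, shuffles_card₂ p.2]))
      (sIterTo W j (i+j) (sortAsc p.1.1) (by rw [length_sortAsc, shuffles_card₁ p.2]; omega))

open SVS in
/-- `D⁰_{i,j} = S(D_{i-1,j}) ∘ (id ⊗ s₀)`, zero when `i = 0`. -/
def D0 (V W : SVS) : (i j : ℕ) → (TT V W i j →ₗ[ZMod 2] TT V W (i+j) (i+j))
  | 0, _ => 0
  | i'+1, j =>
    (tcast V W (show i'+j+1 = i'+1+j by omega) (show i'+j+1 = i'+1+j by omega)).comp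
      ((Dmap (susp V) (susp W) i' j).comp
        (TensorProduct.map LinearMap.id (W.s j 0)))

open SVS in
/-- The higher Eilenberg–MacLane maps `D^k_{i,j} : V_i ⊗ W_j → V_{i+j-k} ⊗ W_{i+j-k}`,
defined recursively: `D^0` as above, and for `k ≥ 1`,
`D^k_{i,j} = S(D^{k-1}_{i-1,j-1}) + D^{k-1}_{i-1,j}∘(d₀⊗id)` (`k` even),
`D^k_{i,j} = S(D^{k-1}_{i-1,j-1}) + D^{k-1}_{i,j-1}∘(id⊗d₀)` (`k` odd);
any term involving a negative index is zero. -/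
def Dk : (k : ℕ) → (V W : SVS) → (i j : ℕ) →
    (TT V W i j →ₗ[ZMod 2] TT V W (i+j-k) (i+j-k))
  | 0, V, W, i, j => D0 V W i j
  | k+1, V, W, i, j =>
    (match i, j with
     | i'+1, j'+1 =>
       if h : k ≤ i' + j' then
         (tcast V W (show i'+j'-k+1 = i'+1+(j'+1)-(k+1) by omega)
            (show i'+j'-k+1 = i'+1+(j'+1)-(k+1) by omega)).comp
           (Dk k (susp V) (susp W) i' j')
       else 0
     | _, _ => 0)
    +
    (if (k+1) % 2 = 0 then
      (match i with
       | 0 => 0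
       | i'+1 =>
         (tcast V W (show i'+j-k = i'+1+j-(k+1) by omega)
            (show i'+j-k = i'+1+j-(k+1) by omega)).comp
           ((Dk k V W i' j).comp (TensorProduct.map (V.d (i'+1) 0) LinearMap.id)))
     else
      (match j with
       | 0 => 0
       | j'+1 =>
         (tcast V W (show i+j'-k = i+(j'+1)-(k+1) by omega)
            (show i+j'-k = i+(j'+1)-(k+1) by omega)).comp
           ((Dk k V W i j').comp (TensorProduct.map LinearMap.id (W.d (j'+1) 0)))))

/-- `φ_k : V_i ⊗ W_j → V_{i+j-k} ⊗ W_{i+j-k}`: the identity if `i = j = k`, zero otherwise. -/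
def phi (V W : SVS) (k i j : ℕ) : TT V W i j →ₗ[ZMod 2] TT V W (i+j-k) (i+j-k) :=
  if h : i = k ∧ j = k then
    tcast V W (show i = i+j-k by rcases h with ⟨h1, h2⟩; omega)
      (show j = i+j-k by rcases h with ⟨h1, h2⟩; omega)
  else 0

/-- `∂ ⊗ id = Σ_{0 ≤ r ≤ a} d_r ⊗ id : V_a ⊗ W_b → V_{a-1} ⊗ W_b`. -/
def bdryL (V W : SVS) (a b : ℕ) : TT V W a b →ₗ[ZMod 2] TT V W (a-1) b :=
  ∑ r ∈ Finset.range (a+1), TensorProduct.map (V.d a r) LinearMap.id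

/-- `id ⊗ ∂ = Σ_{0 ≤ r ≤ b} id ⊗ d_r : V_a ⊗ W_b → V_a ⊗ W_{b-1}`. -/
def bdryR (V W : SVS) (a b : ℕ) : TT V W a b →ₗ[ZMod 2] TT V W a (b-1) :=
  ∑ r ∈ Finset.range (b+1), TensorProduct.map LinearMap.id (W.d b r)

/-- `δ = Σ_{0 ≤ r ≤ min a b} d_r ⊗ d_r : V_a ⊗ W_b → V_{a-1} ⊗ W_{b-1}`. -/
def delMap (V W : SVS) (a b : ℕ) : TT V W a b →ₗ[ZMod 2] TT V W (a-1) (b-1) :=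
  ∑ r ∈ Finset.range (min a b + 1), TensorProduct.map (V.d a r) (W.d b r)

/-- The twisted map `T ∘ D⁰_{j,i} ∘ T : V_i ⊗ W_j → V_{i+j} ⊗ W_{i+j}`
(`D⁰_{j,i}` evaluated on the pair `(W, V)`). -/
def TD0T (V W : SVS) (i j : ℕ) : TT V W i j →ₗ[ZMod 2] TT V W (i+j) (i+j) :=
  (tcast V W (show j+i = i+j by omega) (show j+i = i+j by omega)).comp
    ((twist W V (j+i) (j+i)).comp ((D0 W V j i).comp (twist V W i j)))

/-- The twisted map `T ∘ D^k_{j,i} ∘ T : V_i ⊗ W_j → V_{i+j-k} ⊗ W_{i+j-k}`. -/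
def TDkT (k : ℕ) (V W : SVS) (i j : ℕ) : TT V W i j →ₗ[ZMod 2] TT V W (i+j-k) (i+j-k) :=
  (tcast V W (show j+i-k = i+j-k by omega) (show j+i-k = i+j-k by omega)).comp
    ((twist W V (j+i-k) (j+i-k)).comp ((Dk k W V j i).comp (twist V W i j)))

open SVS in
/-- `A⁰ = D⁰ + TD⁰T + D`, and for `k ≥ 1`
`A^k = D^k + TD^kT + δ∘D^{k-1} + D^{k-1}∘(∂⊗id) + D^{k-1}∘(id⊗∂)`
(terms with a negative index being zero). -/
def Ak : (k : ℕ) → (V W : SVS) → (i j : ℕ) →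
    (TT V W i j →ₗ[ZMod 2] TT V W (i+j-k) (i+j-k))
  | 0, V, W, i, j => D0 V W i j + TD0T V W i j + Dmap V W i j
  | k+1, V, W, i, j =>
    Dk (k+1) V W i j + TDkT (k+1) V W i j
    + (tcast V W (show i+j-k-1 = i+j-(k+1) by omega)
        (show i+j-k-1 = i+j-(k+1) by omega)).comp
        ((delMap V W (i+j-k) (i+j-k)).comp (Dk k V W i j))
    + (match i with
       | 0 => 0
       | i'+1 =>
         (tcast V W (show i'+j-k = i'+1+j-(k+1) by omega)
            (show i'+j-k = i'+1+j-(k+1) by omega)).comp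
           ((Dk k V W i' j).comp (bdryL V W (i'+1) j)))
    + (match j with
       | 0 => 0
       | j'+1 =>
         (tcast V W (show i+j'-k = i+(j'+1)-(k+1) by omega)
            (show i+j'-k = i+(j'+1)-(k+1) by omega)).comp
           ((Dk k V W i j').comp (bdryR V W i (j'+1))))

open SVS in
/-- The suspension term `S(A^k_{i-1,j-1}) : V_i ⊗ W_j → V_{i+j-(k+1)} ⊗ W_{i+j-(k+1)}`
(zero if a negative index occurs). -/
def AsuspTerm (k : ℕ) (V W : SVS) (i j : ℕ) :
    TT V W i j →ₗ[ZMod 2] TT V W (i+j-(k+1)) (i+j-(k+1)) :=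
  match i, j with
  | i'+1, j'+1 =>
    if h : k ≤ i' + j' then
      (tcast V W (show i'+j'-k+1 = i'+1+(j'+1)-(k+1) by omega)
         (show i'+j'-k+1 = i'+1+(j'+1)-(k+1) by omega)).comp
        (Ak k (susp V) (susp W) i' j')
    else 0
  | _, _ => 0

/-- The term `A^k_{i-1,j} ∘ (d₀ ⊗ id) : V_i ⊗ W_j → V_{i+j-(k+1)} ⊗ W_{i+j-(k+1)}`
(zero if `i = 0`). -/
def Ad0Term (k : ℕ) (V W : SVS) (i j : ℕ) :
    TT V W i j →ₗ[ZMod 2] TT V W (i+j-(k+1)) (i+j-(k+1)) :=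
  match i with
  | 0 => 0
  | i'+1 =>
    (tcast V W (show i'+j-k = i'+1+j-(k+1) by omega)
       (show i'+j-k = i'+1+j-(k+1) by omega)).comp
      ((Ak k V W i' j).comp (TensorProduct.map (V.d (i'+1) 0) LinearMap.id))

/-- The term `A^k_{i,j-1} ∘ (id ⊗ d₀) : V_i ⊗ W_j → V_{i+j-(k+1)} ⊗ W_{i+j-(k+1)}`
(zero if `j = 0`). -/
def Aid0Term (k : ℕ) (V W : SVS) (i j : ℕ) :
    TT V W i j →ₗ[ZMod 2] TT V W (i+j-(k+1)) (i+j-(k+1)) :=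
  match j with
  | 0 => 0
  | j'+1 =>
    (tcast V W (show i+j'-k = i+(j'+1)-(k+1) by omega)
       (show i+j'-k = i+(j'+1)-(k+1) by omega)).comp
      ((Ak k V W i j').comp (TensorProduct.map LinearMap.id (W.d (j'+1) 0)))

/-- The index set `V(q,i)`: pairs `(μ, ν)` of `i`-element subsets of
`{q-i, …, q+i-1}`, disjoint with union everything, and `q-i ∈ μ`
(i.e. `μ₁ = q-i` for the increasing enumerations). -/
def deltaSet (q i : ℕ) : Finset (Finset ℕ × Finset ℕ) :=
  ((Finset.Ico (q-i) (q+i)).powersetCard i ×ˢ (Finset.Ico (q-i) (q+i)).powersetCard i).filter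
    fun p => Disjoint p.1 p.2 ∧ p.1 ∪ p.2 = Finset.Ico (q-i) (q+i) ∧ q-i ∈ p.1

lemma deltaSet_card₁ {q i : ℕ} {p : Finset ℕ × Finset ℕ} (hp : p ∈ deltaSet q i) :
    p.1.card = i := by
  simp only [deltaSet, Finset.mem_filter, Finset.mem_product, Finset.mem_powersetCard] at hp
  exact hp.1.1.2

lemma deltaSet_card₂ {q i : ℕ} {p : Finset ℕ × Finset ℕ} (hp : p ∈ deltaSet q i) :
    p.2.card = i := by
  simp only [deltaSet, Finset.mem_filter, Finset.mem_product, Finset.mem_powersetCard] at hp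
  exact hp.1.2.2

/-- Data of a simplicial commutative `F₂`-algebra: a family of commutative
`ZMod 2`-algebras with face and degeneracy maps which are algebra maps;
the simplicial identities are required via `SAlg.IsSimplicial`. -/
structure SAlg : Type 1 where
  X : ℕ → Type
  ring : ∀ n, CommRing (X n)
  alg : ∀ n, Algebra (ZMod 2) (X n)
  d : ∀ n, ℕ → (X n →ₐ[ZMod 2] X (n - 1))
  s : ∀ n, ℕ → (X n →ₐ[ZMod 2] X (n + 1))

attribute [instance] SAlg.ring SAlg.alg

namespace SAlg

def acast (R : SAlg) {m n : ℕ} (h : m = n) : R.X m →ₐ[ZMod 2] R.X n := by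
  subst h; exact AlgHom.id _ _

structure IsSimplicial (R : SAlg) : Prop where
  dd : ∀ n i j, i < j → j ≤ n + 2 →
    (R.d (n+1) i).comp (R.d (n+2) j) = (R.d (n+1) (j-1)).comp (R.d (n+2) i)
  ss : ∀ n i j, i ≤ j → j ≤ n →
    (R.s (n+1) i).comp (R.s n j) = (R.s (n+1) (j+1)).comp (R.s n i)
  ds_lt : ∀ n i j, i < j → j ≤ n + 1 →
    (R.d (n+2) i).comp (R.s (n+1) j) = (R.s n (j-1)).comp (R.d (n+1) i)
  ds_eq : ∀ n i j, (i = j ∨ i = j + 1) → j ≤ n →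
    (R.d (n+1) i).comp (R.s n j) = AlgHom.id _ _
  ds_gt : ∀ n i j, j + 1 < i → i ≤ n + 2 →
    (R.d (n+2) i).comp (R.s (n+1) j) = (R.s n j).comp (R.d (n+1) (i-1))

/-- The underlying simplicial `F₂`-vector space of a simplicial `F₂`-algebra. -/
def toSVS (R : SAlg) : SVS where
  X := R.X
  grp := fun n => inferInstance
  mod := fun n => inferInstance
  d := fun n j => (R.d n j).toLinearMap
  s := fun n j => (R.s n j).toLinearMap

end SAlg

/-- Iterated degeneracies for a simplicial algebra (head of the list applied first). -/
def sIterA (R : SAlg) : (l : List ℕ) → (q : ℕ) → (R.X q →ₐ[ZMod 2] R.X (q + l.length))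
  | [], _ => AlgHom.id _ _
  | a :: t, q =>
    (R.acast (show q + 1 + t.length = q + (t.length + 1) by omega)).comp
      ((sIterA R t (q+1)).comp (R.s q a))

def sIterATo (R : SAlg) (q m : ℕ) (l : List ℕ) (h : q + l.length = m) :
    R.X q →ₐ[ZMod 2] R.X m :=
  (R.acast h).comp (sIterA R l q)

/-- The explicit formula
`δ_i(z) = Σ_{(μ,ν) ∈ V(q,i)} s_{ν_i}⋯s_{ν_1}(z) · s_{μ_i}⋯s_{μ_1}(z) ∈ R_{q+i}`. -/
def deltaOp (R : SAlg) (q i : ℕ) (z : R.X q) : R.X (q+i) :=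
  ∑ p ∈ (deltaSet q i).attach,
    (sIterATo R q (q+i) (sortAsc p.1.2)
        (by rw [length_sortAsc, deltaSet_card₂ p.2]) z)
      * (sIterATo R q (q+i) (sortAsc p.1.1)
        (by rw [length_sortAsc, deltaSet_card₁ p.2]) z)

/-- Multiplication `μ : R_m ⊗ R_m → R_m` as a linear map. -/
def mulMap (R : SAlg) (m : ℕ) :
    TensorProduct (ZMod 2) (R.X m) (R.X m) →ₗ[ZMod 2] R.X m :=
  TensorProduct.lift (LinearMap.mul (ZMod 2) (R.X m))

open SimplexCategory CategoryTheory in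
/-- The suspension `S′(α)` of a morphism `α : [m] → [n]` in the simplex category:
`S′(α)(0) = 0` and `S′(α)(i) = α(i-1) + 1` for `i ≥ 1`. -/
def suspMor {x y : SimplexCategory} (f : x ⟶ y) :
    SimplexCategory.mk (x.len + 1) ⟶ SimplexCategory.mk (y.len + 1) :=
  SimplexCategory.mkHom
    { toFun := fun i => Fin.cases 0 (fun i' => (f.toOrderHom i').succ) i
      monotone' := by
        intro a b hab
        induction a using Fin.cases with
        | zero => simp [Fin.zero_le]
        | succ a' =>
          induction b using Fin.cases with
          | zero =>
            exact absurd (Fin.le_zero_iff.mp hab) (Fin.succ_ne_zero a')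
          | succ b' =>
            simp only [Fin.cases_succ]
            exact Fin.succ_le_succ_iff.mpr
              (f.toOrderHom.monotone (Fin.succ_le_succ_iff.mp hab)) }

open SimplexCategory CategoryTheory in
/-- The suspension functor `S′ : Δ → Δ`, `[n] ↦ [n+1]`,
`(S′α)(0) = 0`, `(S′α)(i) = α(i-1)+1` for `i ≥ 1`. -/
def suspFunctor : CategoryTheory.Functor SimplexCategory SimplexCategory where
  obj x := SimplexCategory.mk (x.len + 1)
  map f := suspMor f
  map_id x := by
    apply SimplexCategory.Hom.ext
    ext i
    induction i using Fin.cases with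
    | zero => rfl
    | succ i' => rfl
  map_comp f g := by
    apply SimplexCategory.Hom.ext
    ext i
    induction i using Fin.cases with
    | zero => rfl
    | succ i' => rfl

open SVS in
/-- The term `S(δ ∘ D_{i-1,j}) ∘ (id ⊗ s₀) : V_i ⊗ W_j → V_{i+j-1} ⊗ W_{i+j-1}`,
i.e. the suspension of the composite `δ ∘ D_{i-1,j} : V_{i-1} ⊗ W_j → V_{i+j-2} ⊗ W_{i+j-2}`
(evaluated at the suspended simplicial vector spaces), precomposed with `id ⊗ s₀`;
any term involving a negative index is zero. -/
def SdelDTerm (V W : SVS) (i j : ℕ) : TT V W i j →ₗ[ZMod 2] TT V W (i+j-1) (i+j-1) :=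
  match i with
  | 0 => 0
  | i'+1 =>
    if h : 1 ≤ i' + j then
      ((tcast V W (show i'+j-1+1 = i'+1+j-1 by omega) (show i'+j-1+1 = i'+1+j-1 by omega)).comp
        ((delMap (susp V) (susp W) (i'+j) (i'+j)).comp
          (Dmap (susp V) (susp W) i' j))).comp
        (TensorProduct.map LinearMap.id (W.s j 0))
    else 0

/-- The term `D_{i-1,j} ∘ (d₀ ⊗ id) : V_i ⊗ W_j → V_{i+j-1} ⊗ W_{i+j-1}`
(zero if `i = 0`). -/
def Dd0Term (V W : SVS) (i j : ℕ) : TT V W i j →ₗ[ZMod 2] TT V W (i+j-1) (i+j-1) :=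
  match i with
  | 0 => 0
  | i'+1 =>
    (tcast V W (show i'+j = i'+1+j-1 by omega) (show i'+j = i'+1+j-1 by omega)).comp
      ((Dmap V W i' j).comp (TensorProduct.map (V.d (i'+1) 0) LinearMap.id))

-- helper development, chunk 1
namespace SAlg
variable (R : SAlg)

lemma acast_irrel {m : ℕ} (h : m = m) (x : R.X m) : R.acast h x = x := rfl

lemma acast_acast {m n p : ℕ} (h1 : m = n) (h2 : n = p) (x : R.X m) :
    R.acast h2 (R.acast h1 x) = R.acast (h1.trans h2) x := by subst h1; subst h2; rfl

lemma d_acast {m n : ℕ} (h : m = n) (j : ℕ) (x : R.X m) :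
    R.d n j (R.acast h x) = R.acast (by omega : m - 1 = n - 1) (R.d m j x) := by subst h; rfl

lemma s_acast {m n : ℕ} (h : m = n) (j : ℕ) (x : R.X m) :
    R.s n j (R.acast h x) = R.acast (by omega : m + 1 = n + 1) (R.s m j x) := by subst h; rfl

lemma mul_acast {m n : ℕ} (h : m = n) (x y : R.X m) :
    R.acast h x * R.acast h y = R.acast h (x * y) := by subst h; rfl

end SAlg

lemma sIterATo_nil (R : SAlg) (q m : ℕ) (h : q + ([] : List ℕ).length = m) (z : R.X q) :
    sIterATo R q m [] h z = R.acast (by simpa using h) z := rfl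

lemma sIterATo_cons (R : SAlg) (q m a : ℕ) (t : List ℕ)
    (h : q + (a :: t).length = m) (z : R.X q) :
    sIterATo R q m (a :: t) h z
      = sIterATo R (q+1) m t (by simp at h ⊢; omega) (R.s q a z) := by
  show R.acast h (sIterA R (a::t) q z) = R.acast _ (sIterA R t (q+1) (R.s q a z))
  rw [show sIterA R (a::t) q z
      = R.acast (show q+1+t.length = q+(a::t).length by simp; omega)
        (sIterA R t (q+1) (R.s q a z)) from rfl, R.acast_acast]

/-- admissibility of a list of degeneracy indices starting at degree `q`. -/
def Adm : List ℕ → ℕ → Prop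
  | [], _ => True
  | a :: t, q => a ≤ q ∧ (∀ b ∈ t, a < b) ∧ Adm t (q+1)

lemma Adm.pairwise : ∀ {l : List ℕ} {q : ℕ}, Adm l q → l.Pairwise (· < ·)
  | [], _, _ => List.Pairwise.nil
  | _ :: _, _, h => List.Pairwise.cons h.2.1 (Adm.pairwise h.2.2)

lemma pigeon (t : List ℕ) (hnd : t.Nodup) (lo hi : ℕ) (h : ∀ x ∈ t, lo ≤ x ∧ x < hi) :
    t.length ≤ hi - lo := by
  have hsub : t.toFinset ⊆ Finset.Ico lo hi := by
    intro x hx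
    rw [List.mem_toFinset] at hx
    exact Finset.mem_Ico.mpr (h x hx)
  have := Finset.card_le_card hsub
  rwa [List.toFinset_card_of_nodup hnd, Nat.card_Ico] at this

lemma adm_of_sorted : ∀ (l : List ℕ) (q : ℕ), l.Pairwise (· < ·) →
    (∀ x ∈ l, x < q + l.length) → Adm l q
  | [], _, _, _ => trivial
  | a :: t, q, hp, hb => by
    have hpt := List.pairwise_cons.mp hp
    refine ⟨?_, hpt.1, adm_of_sorted t (q+1) hpt.2 ?_⟩
    · by_contra hle
      push_neg at hle
      have hnd : t.Nodup := hpt.2.imp (fun hab => Nat.ne_of_lt hab)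
      have hpig := pigeon t hnd (a+1) (q + t.length + 1)
        (fun x hx => ⟨hpt.1 x hx, by have := hb x (List.mem_cons_of_mem a hx); simp only [List.length_cons] at this; omega⟩)
      have hba := hb a (List.mem_cons_self (a := a) (l := t))
      simp only [List.length_cons] at hba
      omega
    · intro x hx
      have := hb x (List.mem_cons_of_mem a hx)
      simp at this ⊢; omega

lemma sIterATo_congr (R : SAlg) (q m : ℕ) {l1 l2 : List ℕ} (h : l1 = l2)
    (h1 : q + l1.length = m) (z : R.X q) :
    sIterATo R q m l1 h1 z = sIterATo R q m l2 (h ▸ h1) z := by subst h; rfl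
def fshift (j : ℕ) (l : List ℕ) : List ℕ := l.map fun x => if x < j then x else x - 1

def clps (j : ℕ) (l : List ℕ) : List ℕ :=
  (l.erase (if j ∈ l then j else j - 1)).map fun x => if j < x then x - 1 else x

lemma face_lem (R : SAlg) (hR : R.IsSimplicial) (j : ℕ) :
    ∀ (l : List ℕ) (q : ℕ), 1 ≤ q → Adm l q → j ∉ l → (j = 0 ∨ j - 1 ∉ l) →
      j ≤ q + l.length →
    j - l.countP (· < j) ≤ q ∧
    ∀ (m : ℕ) (hm : q + l.length = m)
      (hm2 : (q-1) + (fshift j l).length = m - 1) (z : R.X q),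
      R.d m j (sIterATo R q m l hm z)
        = sIterATo R (q-1) (m-1) (fshift j l) hm2
            (R.d q (j - l.countP (· < j)) z) := by
  intro l
  induction l with
  | nil =>
    intro q hq _ _ _ hj
    simp only [List.length_nil, Nat.add_zero] at hj
    refine ⟨by simpa using hj, fun m hm hm2 z => ?_⟩
    rw [sIterATo_nil, R.d_acast]
    simp only [List.countP_nil, Nat.sub_zero, fshift, List.map_nil]
    rw [sIterATo_nil]
  | cons a t IH =>
    intro q hq hadm hjl hjl1 hjle
    obtain ⟨q', rfl⟩ : ∃ q'', q = q'' + 1 := ⟨q - 1, by omega⟩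
    obtain ⟨hat, hpt, hadmt⟩ := hadm
    have hjt : j ∉ t := fun h => hjl (List.mem_cons_of_mem a h)
    have hjt1 : j = 0 ∨ j - 1 ∉ t := by
      rcases hjl1 with h | h
      · exact Or.inl h
      · exact Or.inr (fun hh => h (List.mem_cons_of_mem a hh))
    have hjle' : j ≤ q' + 1 + 1 + t.length := by
      simp only [List.length_cons] at hjle; omega
    have hIH := IH (q' + 1 + 1) (by omega) hadmt hjt hjt1 hjle'
    have hja : a < j ∨ j < a := by
      rcases Nat.lt_trichotomy j a with h | h | h
      · exact Or.inr h
      · exact absurd (h ▸ List.mem_cons_self (a := a) (l := t)) hjl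
      · exact Or.inl h
    have hnd : t.Nodup :=
      List.Pairwise.imp (fun h => Nat.ne_of_lt h) (Adm.pairwise hadmt)
    rcases hja with hja | hja
    · -- a < j ; in fact a + 1 < j
      have hja2 : a + 1 < j := by
        rcases Nat.lt_or_ge (a+1) j with h | h
        · exact h
        · exfalso
          have hje : j = a + 1 := by omega
          rcases hjl1 with h0 | h1
          · omega
          · exact h1 (by simp [hje] : j - 1 ∈ a :: t)
      set c := t.countP (· < j) with hcdef
      have hcb : c ≤ j - 1 - (a + 1) := by
        have hfn : (t.filter (· < j)).Nodup := hnd.filter _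
        have hp2 : ∀ x ∈ t.filter (· < j), a + 1 ≤ x ∧ x < j - 1 := by
          intro x hx
          rw [List.mem_filter] at hx
          have h1 := hpt x hx.1
          have h2 : x < j := by simpa using hx.2
          have h3 : x ≠ j - 1 := by
            rcases hjt1 with h0 | h0
            · omega
            · exact fun he => h0 (he ▸ hx.1)
          omega
        have := pigeon (t.filter (· < j)) hfn (a+1) (j-1) hp2
        rwa [hcdef, List.countP_eq_length_filter]
      have hcb2 : j - c ≤ q' + 1 + 1 := hIH.1
      have hcat : (a :: t).countP (· < j) = c + 1 := by
        rw [List.countP_cons]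
        simp only [decide_eq_true_eq, if_pos hja]
        rfl
      rw [hcat]
      refine ⟨by omega, fun m hm hm2 z => ?_⟩
      rw [sIterATo_cons, hIH.2 m (by simp only [List.length_cons] at hm; omega)
        (by simp only [fshift, List.length_map, List.length_cons] at hm2 ⊢; omega) (R.s (q'+1) a z)]
      have h3 : R.d (q'+1+1) (j - c) (R.s (q'+1) a z)
          = R.s q' a (R.d (q'+1) (j - (c+1)) z) :=
        AlgHom.congr_fun (hR.ds_gt q' (j - c) a (by omega) (by omega)) z
      rw [h3]
      have hfs : fshift j (a :: t) = a :: fshift j t := by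
        simp only [fshift, List.map_cons, if_pos hja]
      rw [sIterATo_congr R _ _ hfs, sIterATo_cons]
      rfl
    · -- j < a
      have hct : t.countP (· < j) = 0 := List.countP_eq_zero.mpr
        (fun x hx => by simp only [decide_eq_true_eq]; have := hpt x hx; omega)
      have hcat : (a :: t).countP (· < j) = 0 := by
        rw [List.countP_cons, hct]
        simp only [decide_eq_true_eq, if_neg (by omega : ¬ a < j)]
      rw [hcat]
      refine ⟨by omega, fun m hm hm2 z => ?_⟩
      rw [sIterATo_cons, hIH.2 m (by simp only [List.length_cons] at hm; omega)
        (by simp only [fshift, List.length_map, List.length_cons] at hm2 ⊢; omega) (R.s (q'+1) a z), hct]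
      have h3 : R.d (q'+1+1) (j - 0) (R.s (q'+1) a z)
          = R.s q' (a-1) (R.d (q'+1) (j - 0) z) :=
        AlgHom.congr_fun (hR.ds_lt q' (j - 0) a (by omega) (by omega)) z
      rw [h3]
      have hfs : fshift j (a :: t) = (a - 1) :: fshift j t := by
        simp only [fshift, List.map_cons, if_neg (by omega : ¬ a < j)]
      rw [sIterATo_congr R _ _ hfs, sIterATo_cons]
      rfl
lemma coll_lem (R : SAlg) (hR : R.IsSimplicial) (j : ℕ) :
    ∀ (l : List ℕ) (q : ℕ), 1 ≤ q → Adm l q → (j ∈ l ∨ (1 ≤ j ∧ j - 1 ∈ l)) →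
    ∀ (m : ℕ) (hm : q + l.length = m) (hm2 : q + (clps j l).length = m - 1) (z : R.X q),
      R.d m j (sIterATo R q m l hm z) = sIterATo R q (m-1) (clps j l) hm2 z := by
  intro l
  induction l with
  | nil =>
    intro q _ _ hC
    rcases hC with h | h
    · exact absurd h List.not_mem_nil
    · exact absurd h.2 List.not_mem_nil
  | cons a t IH =>
    intro q hq hadm hC m hm hm2 z
    obtain ⟨q', rfl⟩ : ∃ q'', q = q'' + 1 := ⟨q - 1, by omega⟩
    obtain ⟨hat, hpt, hadmt⟩ := hadm
    by_cases hCt : j ∈ t ∨ (1 ≤ j ∧ j - 1 ∈ t)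
    · -- collapse happens inside t
      have hja : a < j := by
        rcases hCt with h | h
        · exact hpt _ h
        · have := hpt _ h.2; omega
      have hacons : clps j (a :: t) = a :: clps j t := by
        by_cases h : j ∈ t
        · have hjat : j ∈ a :: t := List.mem_cons_of_mem a h
          simp only [clps, if_pos hjat, if_pos h,
            List.erase_cons_tail (by simp [Nat.ne_of_lt hja] : ¬(a == j) = true),
            List.map_cons, if_neg (by omega : ¬ j < a)]
        · have h2 : 1 ≤ j ∧ j - 1 ∈ t := by
            rcases hCt with h' | h'
            · exact absurd h' h
            · exact h'
          have hj1t : a < j - 1 := hpt _ h2.2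
          have hjat : j ∉ a :: t := by
            simp only [List.mem_cons]
            push_neg
            exact ⟨by omega, h⟩
          simp only [clps, if_neg hjat, if_neg h,
            List.erase_cons_tail (by simp [Nat.ne_of_lt hj1t] : ¬(a == j-1) = true),
            List.map_cons, if_neg (by omega : ¬ j < a)]
      rw [sIterATo_cons, IH (q'+1+1) (by omega) hadmt hCt m
        (by simp only [List.length_cons] at hm; omega)
        (by rw [hacons] at hm2; simp only [List.length_cons] at hm2; omega)
        (R.s (q'+1) a z)]
      rw [sIterATo_congr R _ _ hacons, sIterATo_cons]
    · -- the collapse index is at the head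
      push_neg at hCt
      have hjnt : j ∉ t := hCt.1
      have hsplit : j = a ∨ j = a + 1 := by
        rcases hC with h | h
        · rcases List.mem_cons.mp h with h' | h'
          · exact Or.inl h'
          · exact absurd h' hjnt
        · rcases List.mem_cons.mp h.2 with h' | h'
          · right; omega
          · exact absurd h' (hCt.2 h.1)
      have hface := face_lem R hR j t (q'+1+1) (by omega) hadmt hjnt
        (by
          rcases Nat.eq_zero_or_pos j with h0 | h0
          · exact Or.inl h0
          · exact Or.inr (hCt.2 h0))
        (by rcases hsplit with h | h <;> omega)
      have hct : t.countP (· < j) = 0 := List.countP_eq_zero.mpr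
        (fun x hx => by
          simp only [decide_eq_true_eq]
          have := hpt x hx
          rcases hsplit with h | h
          · omega
          · have : x ≠ a + 1 := fun he => hjnt (h ▸ he ▸ hx)
            omega)
      have heq : clps j (a :: t) = fshift j t := by
        rcases hsplit with h | h
        · subst h
          simp only [clps, if_pos (List.mem_cons_self (a := j) (l := t)), List.erase_cons_head]
          exact List.map_congr_left (fun x hx => by
            have := hpt x hx
            simp only [if_pos this, fshift, if_neg (by omega : ¬ x < j)])
        · have hjat : j ∉ a :: t := by
            simp only [List.mem_cons]
            push_neg
            exact ⟨by omega, hjnt⟩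
          have hj1 : j - 1 = a := by omega
          simp only [clps, if_neg hjat, hj1, List.erase_cons_head]
          exact List.map_congr_left (fun x hx => by
            have hax := hpt x hx
            have : x ≠ a + 1 := fun he => hjnt (h ▸ he ▸ hx)
            simp only [fshift, if_pos (by omega : j < x), if_neg (by omega : ¬ x < j)])
      rw [sIterATo_cons, hface.2 m
        (by simp only [List.length_cons] at hm; omega)
        (by rw [heq] at hm2; simp only [fshift, List.length_map] at hm2 ⊢; omega)
        (R.s (q'+1) a z), hct]
      have hds : R.d (q'+1+1) (j - 0) (R.s (q'+1) a z) = z := by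
        rcases hsplit with h | h
        · exact AlgHom.congr_fun (hR.ds_eq (q'+1) (j-0) a (Or.inl (by omega)) (by omega)) z
        · exact AlgHom.congr_fun (hR.ds_eq (q'+1) (j-0) a (Or.inr (by omega)) (by omega)) z
      rw [hds, sIterATo_congr R _ _ heq]
      rfl
lemma list_eq_of_sorted_toFinset {l1 l2 : List ℕ} (h1 : l1.Pairwise (· < ·))
    (h2 : l2.Pairwise (· < ·)) (h : l1.toFinset = l2.toFinset) : l1 = l2 :=
  List.Perm.eq_of_pairwise'
    (h1.imp (fun hab => Nat.le_of_lt hab)) (h2.imp (fun hab => Nat.le_of_lt hab))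
    (List.perm_of_nodup_nodup_toFinset_eq
      (h1.imp (fun hab => Nat.ne_of_lt hab)) (h2.imp (fun hab => Nat.ne_of_lt hab)) h)

lemma sortAsc_sorted_lt (S : Finset ℕ) : (sortAsc S).Pairwise (· < ·) :=
  List.sortedLT_iff_pairwise.mp (Finset.sortedLT_sort S)

lemma sortAsc_nodup (S : Finset ℕ) : (sortAsc S).Nodup := Finset.sort_nodup S _

lemma mem_sortAsc {S : Finset ℕ} {x : ℕ} : x ∈ sortAsc S ↔ x ∈ S := Finset.mem_sort _

lemma sortAsc_erase (S : Finset ℕ) (a : ℕ) :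
    (sortAsc S).erase a = sortAsc (S.erase a) := by
  apply list_eq_of_sorted_toFinset
  · exact List.Pairwise.sublist List.erase_sublist (sortAsc_sorted_lt S)
  · exact sortAsc_sorted_lt _
  · ext x
    simp only [List.mem_toFinset, (sortAsc_nodup S).mem_erase_iff, mem_sortAsc,
      Finset.mem_erase]

lemma adm_sortAsc (S : Finset ℕ) (q : ℕ) (h : ∀ x ∈ S, x < q + S.card) :
    Adm (sortAsc S) q :=
  adm_of_sorted _ _ (sortAsc_sorted_lt S)
    (fun x hx => by rw [length_sortAsc]; exact h x (mem_sortAsc.mp hx))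

/-- collapse of an iterated degeneracy along a face index `j ∈ S`. -/
lemma d_sIter_mem (R : SAlg) (hR : R.IsSimplicial) (q j : ℕ) (hq : 1 ≤ q)
    (S : Finset ℕ) (hS : ∀ x ∈ S, x < q + S.card) (hj : j ∈ S)
    (m : ℕ) (pf : q + (sortAsc S).length = m)
    (pf' : q + ((sortAsc (S.erase j)).map (fun x => if j < x then x - 1 else x)).length = m - 1)
    (z : R.X q) :
    R.d m j (sIterATo R q m (sortAsc S) pf z)
      = sIterATo R q (m-1)
          ((sortAsc (S.erase j)).map (fun x => if j < x then x - 1 else x)) pf' z := by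
  have hcl : clps j (sortAsc S)
      = (sortAsc (S.erase j)).map (fun x => if j < x then x - 1 else x) := by
    rw [clps, if_pos (mem_sortAsc.mpr hj), sortAsc_erase]
  rw [coll_lem R hR j (sortAsc S) q hq (adm_sortAsc S q hS)
    (Or.inl (mem_sortAsc.mpr hj)) m pf (by rw [hcl]; exact pf') z]
  rw [sIterATo_congr R _ _ hcl]

/-- collapse of an iterated degeneracy along a face index with `j - 1 ∈ S`, `j ∉ S`. -/
lemma d_sIter_mem1 (R : SAlg) (hR : R.IsSimplicial) (q j : ℕ) (hq : 1 ≤ q) (hj1 : 1 ≤ j)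
    (S : Finset ℕ) (hS : ∀ x ∈ S, x < q + S.card) (hj : j ∉ S) (hjm : j - 1 ∈ S)
    (m : ℕ) (pf : q + (sortAsc S).length = m)
    (pf' : q + ((sortAsc (S.erase (j-1))).map (fun x => if j < x then x - 1 else x)).length = m - 1)
    (z : R.X q) :
    R.d m j (sIterATo R q m (sortAsc S) pf z)
      = sIterATo R q (m-1)
          ((sortAsc (S.erase (j-1))).map (fun x => if j < x then x - 1 else x)) pf' z := by
  have hcl : clps j (sortAsc S)
      = (sortAsc (S.erase (j-1))).map (fun x => if j < x then x - 1 else x) := by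
    rw [clps, if_neg (fun h => hj (mem_sortAsc.mp h)), sortAsc_erase]
  rw [coll_lem R hR j (sortAsc S) q hq (adm_sortAsc S q hS)
    (Or.inr ⟨hj1, mem_sortAsc.mpr hjm⟩) m pf (by rw [hcl]; exact pf') z]
  rw [sIterATo_congr R _ _ hcl]

/-- vanishing of the face of an iterated degeneracy on a cycle, when no collapse occurs. -/
lemma d_sIter_zero (R : SAlg) (hR : R.IsSimplicial) (q j : ℕ) (hq : 1 ≤ q)
    (S : Finset ℕ) (hS : ∀ x ∈ S, x < q + S.card) (hj : j ∉ S)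
    (hjm : j = 0 ∨ j - 1 ∉ S) (hjle : j ≤ q + S.card)
    (m : ℕ) (pf : q + (sortAsc S).length = m)
    (z : R.X q) (hz : ∀ r ≤ q, R.d q r z = 0) :
    R.d m j (sIterATo R q m (sortAsc S) pf z) = 0 := by
  have hface := face_lem R hR j (sortAsc S) q hq (adm_sortAsc S q hS)
    (fun h => hj (mem_sortAsc.mp h))
    (by rcases hjm with h | h
        exacts [Or.inl h, Or.inr (fun hh => h (mem_sortAsc.mp hh))])
    (by rw [length_sortAsc]; omega)
  rw [hface.2 m pf (by have pf2 := pf; rw [length_sortAsc] at pf2; simp only [fshift, List.length_map, length_sortAsc]; omega) z,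
    hz _ hface.1, map_zero]
lemma sIterATo_scongr (R : SAlg) (q m : ℕ) {S1 S2 : Finset ℕ} (h : S1 = S2)
    (pf : q + (sortAsc S1).length = m) (z : R.X q) :
    sIterATo R q m (sortAsc S1) pf z
      = sIterATo R q m (sortAsc S2) (by rw [h] at pf; exact pf) z := by
  subst h; rfl

lemma deltaSet_mem_iff {q i : ℕ} {p : Finset ℕ × Finset ℕ} :
    p ∈ deltaSet q i ↔ p.1.card = i ∧ p.2.card = i ∧ Disjoint p.1 p.2 ∧
      p.1 ∪ p.2 = Finset.Ico (q-i) (q+i) ∧ q - i ∈ p.1 := by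
  simp only [deltaSet, Finset.mem_filter, Finset.mem_product, Finset.mem_powersetCard]
  constructor
  · rintro ⟨⟨⟨-, h1⟩, -, h2⟩, h3, h4, h5⟩; exact ⟨h1, h2, h3, h4, h5⟩
  · rintro ⟨h1, h2, h3, h4, h5⟩
    exact ⟨⟨⟨by rw [← h4]; exact Finset.subset_union_left, h1⟩,
      by rw [← h4]; exact Finset.subset_union_right, h2⟩, h3, h4, h5⟩

/-- The swap used for cancellation. -/
def gp (q i j : ℕ) (p : Finset ℕ × Finset ℕ) : Finset ℕ × Finset ℕ :=
  if j = q - i + 1 then (insert (q-i) (p.2.erase j), insert j (p.1.erase (q-i)))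
  else if j ∈ p.2 then (insert j (p.1.erase (j-1)), insert (j-1) (p.2.erase j))
  else (insert (j-1) (p.1.erase j), insert j (p.2.erase (j-1)))

/-- The condition under which the face of a summand of `deltaOp` can be nonzero. -/
def Cnd (j : ℕ) (p : Finset ℕ × Finset ℕ) : Prop :=
  (j ∈ p.2 ∧ 1 ≤ j ∧ j - 1 ∈ p.1) ∨ (j ∈ p.1 ∧ 1 ≤ j ∧ j - 1 ∈ p.2)

lemma pair_move {A B : Finset ℕ} {x y : ℕ} (hxA : x ∈ A) (hyB : y ∈ B)
    (hdis : Disjoint A B) (hxy : x ≠ y) :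
    (insert y (A.erase x)).card = A.card ∧ (insert x (B.erase y)).card = B.card ∧
    Disjoint (insert y (A.erase x)) (insert x (B.erase y)) ∧
    insert y (A.erase x) ∪ insert x (B.erase y) = A ∪ B := by
  have hyA : y ∉ A := fun h => (Finset.disjoint_left.mp hdis h) hyB
  have hxB : x ∉ B := fun h => (Finset.disjoint_left.mp hdis hxA) h
  refine ⟨?_, ?_, ?_, ?_⟩
  · rw [Finset.card_insert_of_notMem (fun h => hyA (Finset.mem_erase.mp h).2),
      Finset.card_erase_of_mem hxA]
    have : 1 ≤ A.card := Finset.card_pos.mpr ⟨x, hxA⟩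
    omega
  · rw [Finset.card_insert_of_notMem (fun h => hxB (Finset.mem_erase.mp h).2),
      Finset.card_erase_of_mem hyB]
    have : 1 ≤ B.card := Finset.card_pos.mpr ⟨y, hyB⟩
    omega
  · rw [Finset.disjoint_left]
    intro z hz hz'
    rcases Finset.mem_insert.mp hz with rfl | hz
    · rcases Finset.mem_insert.mp hz' with h | h
      · exact hxy.symm h
      · exact (Finset.mem_erase.mp h).1 rfl
    · have hzA := (Finset.mem_erase.mp hz).2
      rcases Finset.mem_insert.mp hz' with rfl | h
      · exact (Finset.mem_erase.mp hz).1 rfl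
      · exact Finset.disjoint_left.mp hdis hzA (Finset.mem_erase.mp h).2
  · ext w
    simp only [Finset.mem_union, Finset.mem_insert, Finset.mem_erase]
    constructor
    · rintro (⟨rfl | ⟨-, h⟩⟩ | ⟨rfl | ⟨-, h⟩⟩)
      · exact Or.inr hyB
      · exact Or.inl h
      · exact Or.inl hxA
      · exact Or.inr h
    · rintro (h | h)
      · by_cases hw : w = x
        · exact Or.inr (Or.inl hw)
        · exact Or.inl (Or.inr ⟨hw, h⟩)
      · by_cases hw : w = y
        · exact Or.inl (Or.inl hw)
        · exact Or.inr (Or.inr ⟨hw, h⟩)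

lemma cnd_cases {q i j : ℕ} (h2 : 2 ≤ i) (hiq : i ≤ q) {p : Finset ℕ × Finset ℕ}
    (hp : p ∈ deltaSet q i) (hC : Cnd j p) :
    (j = q - i + 1 ∧ j ∈ p.2 ∧ j - 1 = q - i ∧ j < q + i) ∨
    (j ≠ q - i + 1 ∧ j ∈ p.2 ∧ 1 ≤ j ∧ j - 1 ∈ p.1 ∧ q - i + 2 ≤ j ∧ j < q + i) ∨
    (j ≠ q - i + 1 ∧ j ∉ p.2 ∧ j ∈ p.1 ∧ 1 ≤ j ∧ j - 1 ∈ p.2 ∧ q - i + 2 ≤ j ∧ j < q + i) := by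
  obtain ⟨hc1, hc2, hdis, hun, hqi⟩ := deltaSet_mem_iff.mp hp
  have hsub1 : ∀ x ∈ p.1, q - i ≤ x ∧ x < q + i := by
    intro x hx
    have : x ∈ Finset.Ico (q-i) (q+i) := by
      rw [← hun]; exact Finset.mem_union_left _ hx
    exact Finset.mem_Ico.mp this
  have hsub2 : ∀ x ∈ p.2, q - i ≤ x ∧ x < q + i := by
    intro x hx
    have : x ∈ Finset.Ico (q-i) (q+i) := by
      rw [← hun]; exact Finset.mem_union_right _ hx
    exact Finset.mem_Ico.mp this
  rcases hC with ⟨hjv, hj1, hj1m⟩ | ⟨hjm, hj1, hj1v⟩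
  · have hb1 := hsub1 _ hj1m
    have hb2 := hsub2 _ hjv
    by_cases hj : j = q - i + 1
    · exact Or.inl ⟨hj, hjv, by omega, hb2.2⟩
    · exact Or.inr (Or.inl ⟨hj, hjv, hj1, hj1m, by omega, hb2.2⟩)
  · have hb1 := hsub1 _ hjm
    have hb2 := hsub2 _ hj1v
    have hq1 : q - i ∈ p.1 := hqi
    have hne : j - 1 ≠ q - i := by
      intro h
      exact Finset.disjoint_left.mp hdis hq1 (h ▸ hj1v)
    have hjnv : j ∉ p.2 := fun h => Finset.disjoint_left.mp hdis hjm h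
    exact Or.inr (Or.inr ⟨by omega, hjnv, hjm, hj1, hj1v, by omega, hb1.2⟩)

lemma gp_mem {q i j : ℕ} (h2 : 2 ≤ i) (hiq : i ≤ q) {p : Finset ℕ × Finset ℕ}
    (hp : p ∈ deltaSet q i) (hC : Cnd j p) : gp q i j p ∈ deltaSet q i := by
  obtain ⟨hc1, hc2, hdis, hun, hqi⟩ := deltaSet_mem_iff.mp hp
  rcases cnd_cases h2 hiq hp hC with ⟨hj, hjv, hj1, hlt⟩ |
    ⟨hj, hjv, hj1, hj1m, hge, hlt⟩ | ⟨hj, hjv, hjm, hj1, hj1v, hge, hlt⟩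
  · have hm := pair_move hqi hjv hdis (by omega : q - i ≠ j)
    unfold gp
    rw [if_pos hj]
    refine deltaSet_mem_iff.mpr ⟨?_, ?_, ?_, ?_, ?_⟩
    · exact hm.2.1.trans hc2
    · exact hm.1.trans hc1
    · exact hm.2.2.1.symm
    · rw [Finset.union_comm]
      exact hm.2.2.2.trans hun
    · exact Finset.mem_insert_self _ _
  · have hm := pair_move hj1m hjv hdis (by omega : j - 1 ≠ j)
    unfold gp
    rw [if_neg hj, if_pos hjv]
    refine deltaSet_mem_iff.mpr ⟨hm.1.trans hc1, hm.2.1.trans hc2, hm.2.2.1,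
      hm.2.2.2.trans hun, ?_⟩
    exact Finset.mem_insert_of_mem (Finset.mem_erase.mpr ⟨by omega, hqi⟩)
  · have hm := pair_move hjm hj1v hdis (by omega : j ≠ j - 1)
    unfold gp
    rw [if_neg hj, if_neg hjv]
    refine deltaSet_mem_iff.mpr ⟨hm.1.trans hc1, hm.2.1.trans hc2, hm.2.2.1,
      hm.2.2.2.trans hun, ?_⟩
    exact Finset.mem_insert_of_mem (Finset.mem_erase.mpr ⟨by omega, hqi⟩)

lemma gp_cnd {q i j : ℕ} (h2 : 2 ≤ i) (hiq : i ≤ q) {p : Finset ℕ × Finset ℕ}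
    (hp : p ∈ deltaSet q i) (hC : Cnd j p) : Cnd j (gp q i j p) := by
  obtain ⟨hc1, hc2, hdis, hun, hqi⟩ := deltaSet_mem_iff.mp hp
  rcases cnd_cases h2 hiq hp hC with ⟨hj, hjv, hj1, hlt⟩ |
    ⟨hj, hjv, hj1, hj1m, hge, hlt⟩ | ⟨hj, hjv, hjm, hj1, hj1v, hge, hlt⟩
  · unfold gp
    rw [if_pos hj]
    exact Or.inl ⟨Finset.mem_insert_self _ _, by omega,
      by rw [(by omega : j - 1 = q - i)]; exact Finset.mem_insert_self _ _⟩
  · unfold gp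
    rw [if_neg hj, if_pos hjv]
    exact Or.inr ⟨Finset.mem_insert_self _ _, hj1, Finset.mem_insert_self _ _⟩
  · unfold gp
    rw [if_neg hj, if_neg hjv]
    exact Or.inl ⟨Finset.mem_insert_self _ _, hj1, Finset.mem_insert_self _ _⟩

lemma gp_invol {q i j : ℕ} (h2 : 2 ≤ i) (hiq : i ≤ q) {p : Finset ℕ × Finset ℕ}
    (hp : p ∈ deltaSet q i) (hC : Cnd j p) : gp q i j (gp q i j p) = p := by
  obtain ⟨hc1, hc2, hdis, hun, hqi⟩ := deltaSet_mem_iff.mp hp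
  rcases cnd_cases h2 hiq hp hC with ⟨hj, hjv, hj1, hlt⟩ |
    ⟨hj, hjv, hj1, hj1m, hge, hlt⟩ | ⟨hj, hjv, hjm, hj1, hj1v, hge, hlt⟩
  · have hjnm : j ∉ p.1 := fun h => Finset.disjoint_left.mp hdis h hjv
    have hqinv : q - i ∉ p.2 := fun h => Finset.disjoint_left.mp hdis hqi h
    unfold gp
    rw [if_pos hj, if_pos hj]
    have e1 : (insert j (p.1.erase (q-i))).erase j = p.1.erase (q-i) :=
      Finset.erase_insert (fun h => hjnm (Finset.mem_erase.mp h).2)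
    have e2 : (insert (q-i) (p.2.erase j)).erase (q-i) = p.2.erase j :=
      Finset.erase_insert (fun h => hqinv (Finset.mem_erase.mp h).2)
    rw [Prod.ext_iff]
    constructor
    · show insert (q-i) ((insert j (p.1.erase (q-i))).erase j) = p.1
      rw [e1, Finset.insert_erase hqi]
    · show insert j ((insert (q-i) (p.2.erase j)).erase (q-i)) = p.2
      rw [e2, Finset.insert_erase hjv]
  · have hjnm : j ∉ p.1 := fun h => Finset.disjoint_left.mp hdis h hjv
    have hj1nv : j - 1 ∉ p.2 := fun h => Finset.disjoint_left.mp hdis hj1m h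
    unfold gp
    rw [if_neg hj, if_pos hjv, if_neg hj,
      if_neg (show j ∉ insert (j-1) (p.2.erase j) by
        intro h
        rcases Finset.mem_insert.mp h with h | h
        · omega
        · exact (Finset.mem_erase.mp h).1 rfl)]
    have e1 : (insert j (p.1.erase (j-1))).erase j = p.1.erase (j-1) :=
      Finset.erase_insert (fun h => hjnm (Finset.mem_erase.mp h).2)
    have e2 : (insert (j-1) (p.2.erase j)).erase (j-1) = p.2.erase j :=
      Finset.erase_insert (fun h => hj1nv (Finset.mem_erase.mp h).2)
    rw [Prod.ext_iff]
    constructor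
    · show insert (j-1) ((insert j (p.1.erase (j-1))).erase j) = p.1
      rw [e1, Finset.insert_erase hj1m]
    · show insert j ((insert (j-1) (p.2.erase j)).erase (j-1)) = p.2
      rw [e2, Finset.insert_erase hjv]
  · have hj1nm : j - 1 ∉ p.1 := fun h => Finset.disjoint_left.mp hdis h hj1v
    unfold gp
    rw [if_neg hj, if_neg hjv, if_neg hj,
      if_pos (Finset.mem_insert_self j (p.2.erase (j-1)))]
    have e1 : (insert (j-1) (p.1.erase j)).erase (j-1) = p.1.erase j :=
      Finset.erase_insert (fun h => hj1nm (Finset.mem_erase.mp h).2)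
    have e2 : (insert j (p.2.erase (j-1))).erase j = p.2.erase (j-1) :=
      Finset.erase_insert (fun h => hjv (Finset.mem_erase.mp h).2)
    rw [Prod.ext_iff]
    constructor
    · show insert j ((insert (j-1) (p.1.erase j)).erase (j-1)) = p.1
      rw [e1, Finset.insert_erase hjm]
    · show insert (j-1) ((insert j (p.2.erase (j-1))).erase j) = p.2
      rw [e2, Finset.insert_erase hj1v]

lemma gp_ne {q i j : ℕ} (h2 : 2 ≤ i) (hiq : i ≤ q) {p : Finset ℕ × Finset ℕ}
    (hp : p ∈ deltaSet q i) (hC : Cnd j p) : gp q i j p ≠ p := by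
  obtain ⟨hc1, hc2, hdis, hun, hqi⟩ := deltaSet_mem_iff.mp hp
  rcases cnd_cases h2 hiq hp hC with ⟨hj, hjv, hj1, hlt⟩ |
    ⟨hj, hjv, hj1, hj1m, hge, hlt⟩ | ⟨hj, hjv, hjm, hj1, hj1v, hge, hlt⟩
  · unfold gp
    rw [if_pos hj]
    intro h
    obtain ⟨x, hx, hxne⟩ : ∃ x ∈ p.1, x ≠ q - i :=
      Finset.exists_mem_ne (by omega) (q - i)
    have hx2 : x ∈ p.2 := by
      rw [← (Prod.ext_iff.mp h).2]
      exact Finset.mem_insert_of_mem (Finset.mem_erase.mpr ⟨hxne, hx⟩)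
    exact Finset.disjoint_left.mp hdis hx hx2
  · unfold gp
    rw [if_neg hj, if_pos hjv]
    intro h
    have hjnm : j ∉ p.1 := fun hh => Finset.disjoint_left.mp hdis hh hjv
    exact hjnm ((Prod.ext_iff.mp h).1 ▸ Finset.mem_insert_self j _)
  · unfold gp
    rw [if_neg hj, if_neg hjv]
    intro h
    exact hjv ((Prod.ext_iff.mp h).2 ▸ Finset.mem_insert_self j _)
lemma factor_pair (R : SAlg) (hR : R.IsSimplicial) (q j m : ℕ) (hq : 1 ≤ q) (hj : 1 ≤ j)
    (S : Finset ℕ) (hjS : j ∈ S) (hj1S : j - 1 ∉ S)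
    (hS : ∀ x ∈ S, x < q + S.card)
    (pf : q + (sortAsc S).length = m)
    (pf2 : q + (sortAsc (insert (j-1) (S.erase j))).length = m)
    (z : R.X q) :
    R.d m j (sIterATo R q m (sortAsc S) pf z)
      = R.d m j (sIterATo R q m (sortAsc (insert (j-1) (S.erase j))) pf2 z) := by
  have hcard1 : 1 ≤ S.card := Finset.card_pos.mpr ⟨j, hjS⟩
  have hcard : (insert (j-1) (S.erase j)).card = S.card := by
    rw [Finset.card_insert_of_notMem (fun h => hj1S (Finset.mem_erase.mp h).2),
      Finset.card_erase_of_mem hjS]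
    omega
  have hS' : ∀ x ∈ insert (j-1) (S.erase j), x < q + (insert (j-1) (S.erase j)).card := by
    rw [hcard]
    intro x hx
    rcases Finset.mem_insert.mp hx with rfl | hx
    · have := hS j hjS; omega
    · exact hS x (Finset.mem_erase.mp hx).2
  have hjnew : j ∉ insert (j-1) (S.erase j) := by
    intro h
    rcases Finset.mem_insert.mp h with h | h
    · omega
    · exact (Finset.mem_erase.mp h).1 rfl
  have hEq : (insert (j-1) (S.erase j)).erase (j-1) = S.erase j :=
    Finset.erase_insert (fun h => hj1S (Finset.mem_erase.mp h).2)
  rw [d_sIter_mem R hR q j hq S hS hjS m pf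
      (by rw [List.length_map, length_sortAsc, Finset.card_erase_of_mem hjS]
          rw [length_sortAsc] at pf; omega) z,
    d_sIter_mem1 R hR q j hq hj _ hS' hjnew (Finset.mem_insert_self _ _) m pf2
      (by rw [List.length_map, length_sortAsc, hEq, Finset.card_erase_of_mem hjS]
          rw [length_sortAsc] at pf; omega) z,
    sIterATo_congr R _ _
      (show (sortAsc ((insert (j-1) (S.erase j)).erase (j-1))).map
          (fun x => if j < x then x - 1 else x)
        = (sortAsc (S.erase j)).map (fun x => if j < x then x - 1 else x) by rw [hEq])]

lemma char2 {n : ℕ} (R : SAlg) (x : R.X n) : x + x = 0 := by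
  have h0 : (1 + 1 : R.X n) = 0 := by
    rw [← map_one (algebraMap (ZMod 2) (R.X n)), ← map_add,
      (by decide : (1 + 1 : ZMod 2) = 0), map_zero]
  calc x + x = (1 + 1) * x := by ring
  _ = 0 := by rw [h0, zero_mul]

lemma swap_term (R : SAlg) (hR : R.IsSimplicial) {q i : ℕ} (h2 : 2 ≤ i) (hiq : i ≤ q)
    (j : ℕ) (z : R.X q) {p : Finset ℕ × Finset ℕ} (hp : p ∈ deltaSet q i) (hC : Cnd j p)
    (pfa : q + (sortAsc (gp q i j p).2).length = q + i)
    (pfb : q + (sortAsc (gp q i j p).1).length = q + i)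
    (pfc : q + (sortAsc p.2).length = q + i)
    (pfd : q + (sortAsc p.1).length = q + i) :
    R.d (q+i) j (sIterATo R q (q+i) (sortAsc (gp q i j p).2) pfa z
        * sIterATo R q (q+i) (sortAsc (gp q i j p).1) pfb z)
      = R.d (q+i) j (sIterATo R q (q+i) (sortAsc p.2) pfc z
        * sIterATo R q (q+i) (sortAsc p.1) pfd z) := by
  obtain ⟨hc1, hc2, hdis, hun, hqi⟩ := deltaSet_mem_iff.mp hp
  have hq1 : 1 ≤ q := by omega
  have hsub1 : p.1 ⊆ Finset.Ico (q-i) (q+i) := by rw [← hun]; exact Finset.subset_union_left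
  have hsub2 : p.2 ⊆ Finset.Ico (q-i) (q+i) := by rw [← hun]; exact Finset.subset_union_right
  have hbd1 : ∀ x ∈ p.1, x < q + p.1.card := by
    intro x hx; rw [hc1]; exact (Finset.mem_Ico.mp (hsub1 hx)).2
  have hbd2 : ∀ x ∈ p.2, x < q + p.2.card := by
    intro x hx; rw [hc2]; exact (Finset.mem_Ico.mp (hsub2 hx)).2
  rw [map_mul, map_mul]
  rcases cnd_cases h2 hiq hp hC with ⟨hj, hjv, hj1, hlt⟩ |
    ⟨hj, hjv, hj1, hj1m, hge, hlt⟩ | ⟨hj, hjv, hjm, hj1, hj1v, hge, hlt⟩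
  · -- special case j = q - i + 1
    simp only [gp, if_pos hj] at pfa pfb ⊢
    have hjm : j ∉ p.1 := fun h => Finset.disjoint_left.mp hdis h hjv
    have hqinv : q - i ∉ p.2 := fun h => Finset.disjoint_left.mp hdis hqi h
    -- left second factor: S := insert j (p.1.erase (q-i))
    have hA : j ∈ insert j (p.1.erase (q-i)) := Finset.mem_insert_self _ _
    have hA1 : j - 1 ∉ insert j (p.1.erase (q-i)) := by
      intro h
      rcases Finset.mem_insert.mp h with h | h
      · omega
      · exact (Finset.mem_erase.mp h).1 (by omega)
    have hcardA : (insert j (p.1.erase (q-i))).card = i := by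
      rw [Finset.card_insert_of_notMem (fun h => hjm (Finset.mem_erase.mp h).2),
        Finset.card_erase_of_mem hqi, hc1]
      omega
    have hbdA : ∀ x ∈ insert j (p.1.erase (q-i)), x < q + (insert j (p.1.erase (q-i))).card := by
      rw [hcardA]
      intro x hx
      rcases Finset.mem_insert.mp hx with rfl | hx
      · omega
      · have := hbd1 x (Finset.mem_erase.mp hx).2; rw [hc1] at this; omega
    have e1 := factor_pair R hR q j (q+i) hq1 (by omega) _ hA hA1 hbdA pfa
      (by rw [length_sortAsc,
            show (insert (j-1) ((insert j (p.1.erase (q-i))).erase j)) = p.1 by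
              rw [Finset.erase_insert (fun h => hjm (Finset.mem_erase.mp h).2),
                (by omega : j - 1 = q - i), Finset.insert_erase hqi],
            hc1]) z
    rw [e1, sIterATo_scongr R _ _ (show insert (j-1) ((insert j (p.1.erase (q-i))).erase j) = p.1 by
        rw [Finset.erase_insert (fun h => hjm (Finset.mem_erase.mp h).2),
          (by omega : j - 1 = q - i), Finset.insert_erase hqi])]
    -- right first factor: S := p.2
    have e2 := factor_pair R hR q j (q+i) hq1 (by omega) p.2 hjv
      (fun h => hqinv ((by omega : j - 1 = q - i) ▸ h)) hbd2 pfc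
      (by rw [length_sortAsc,
            show (insert (j-1) (p.2.erase j)).card = p.2.card by
              rw [Finset.card_insert_of_notMem
                  (fun h => hqinv ((by omega : j - 1 = q - i) ▸ (Finset.mem_erase.mp h).2)),
                Finset.card_erase_of_mem hjv]
              have : 1 ≤ p.2.card := Finset.card_pos.mpr ⟨j, hjv⟩
              omega,
            hc2]) z
    rw [e2, sIterATo_scongr R _ _
      (show insert (j-1) (p.2.erase j) = insert (q-i) (p.2.erase j) by
        rw [(by omega : j - 1 = q - i)])]
    exact mul_comm _ _
  · -- usual case, j ∈ p.2, j - 1 ∈ p.1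
    simp only [gp, if_neg hj, if_pos hjv] at pfa pfb ⊢
    have hjm : j ∉ p.1 := fun h => Finset.disjoint_left.mp hdis h hjv
    have hj1nv : j - 1 ∉ p.2 := fun h => Finset.disjoint_left.mp hdis hj1m h
    -- the ν factor
    have e1 := factor_pair R hR q j (q+i) hq1 hj1 p.2 hjv hj1nv hbd2 pfc pfa z
    rw [e1]
    -- the μ factor : S := insert j (p.1.erase (j-1))
    have hA : j ∈ insert j (p.1.erase (j-1)) := Finset.mem_insert_self _ _
    have hA1 : j - 1 ∉ insert j (p.1.erase (j-1)) := by
      intro h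
      rcases Finset.mem_insert.mp h with h | h
      · omega
      · exact (Finset.mem_erase.mp h).1 rfl
    have hcardA : (insert j (p.1.erase (j-1))).card = i := by
      rw [Finset.card_insert_of_notMem (fun h => hjm (Finset.mem_erase.mp h).2),
        Finset.card_erase_of_mem hj1m, hc1]
      omega
    have hbdA : ∀ x ∈ insert j (p.1.erase (j-1)), x < q + (insert j (p.1.erase (j-1))).card := by
      rw [hcardA]
      intro x hx
      rcases Finset.mem_insert.mp hx with rfl | hx
      · omega
      · have := hbd1 x (Finset.mem_erase.mp hx).2; rw [hc1] at this; omega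
    have hEA : insert (j-1) ((insert j (p.1.erase (j-1))).erase j) = p.1 := by
      rw [Finset.erase_insert (fun h => hjm (Finset.mem_erase.mp h).2),
        Finset.insert_erase hj1m]
    have e2 := factor_pair R hR q j (q+i) hq1 hj1 _ hA hA1 hbdA pfb
      (by rw [length_sortAsc, hEA, hc1]) z
    rw [e2, sIterATo_scongr R _ _ hEA]
  · -- usual case, j ∈ p.1, j - 1 ∈ p.2
    simp only [gp, if_neg hj, if_neg hjv] at pfa pfb ⊢
    have hj1nm : j - 1 ∉ p.1 := fun h => Finset.disjoint_left.mp hdis h hj1v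
    -- the μ factor
    have e1 := factor_pair R hR q j (q+i) hq1 hj1 p.1 hjm hj1nm hbd1 pfd pfb z
    rw [e1]
    -- the ν factor : S := insert j (p.2.erase (j-1))
    have hA : j ∈ insert j (p.2.erase (j-1)) := Finset.mem_insert_self _ _
    have hA1 : j - 1 ∉ insert j (p.2.erase (j-1)) := by
      intro h
      rcases Finset.mem_insert.mp h with h | h
      · omega
      · exact (Finset.mem_erase.mp h).1 rfl
    have hcardA : (insert j (p.2.erase (j-1))).card = i := by
      rw [Finset.card_insert_of_notMem (fun h => hjv (Finset.mem_erase.mp h).2),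
        Finset.card_erase_of_mem hj1v, hc2]
      omega
    have hbdA : ∀ x ∈ insert j (p.2.erase (j-1)), x < q + (insert j (p.2.erase (j-1))).card := by
      rw [hcardA]
      intro x hx
      rcases Finset.mem_insert.mp hx with rfl | hx
      · omega
      · have := hbd2 x (Finset.mem_erase.mp hx).2; rw [hc2] at this; omega
    have hEA : insert (j-1) ((insert j (p.2.erase (j-1))).erase j) = p.2 := by
      rw [Finset.erase_insert (fun h => hjv (Finset.mem_erase.mp h).2),
        Finset.insert_erase hj1v]
    have e2 := factor_pair R hR q j (q+i) hq1 hj1 _ hA hA1 hbdA pfa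
      (by rw [length_sortAsc, hEA, hc2]) z
    rw [e2, sIterATo_scongr R _ _ hEA]

lemma zero_term (R : SAlg) (hR : R.IsSimplicial) {q i : ℕ} (h2 : 2 ≤ i) (hiq : i ≤ q)
    (j : ℕ) (hj : j ≤ q + i) (z : R.X q) (hz : ∀ r ≤ q, R.d q r z = 0)
    {p : Finset ℕ × Finset ℕ} (hp : p ∈ deltaSet q i) (hnC : ¬ Cnd j p)
    (pfc : q + (sortAsc p.2).length = q + i)
    (pfd : q + (sortAsc p.1).length = q + i) :
    R.d (q+i) j (sIterATo R q (q+i) (sortAsc p.2) pfc z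
        * sIterATo R q (q+i) (sortAsc p.1) pfd z) = 0 := by
  obtain ⟨hc1, hc2, hdis, hun, hqi⟩ := deltaSet_mem_iff.mp hp
  have hq1 : 1 ≤ q := by omega
  have hsub1 : p.1 ⊆ Finset.Ico (q-i) (q+i) := by rw [← hun]; exact Finset.subset_union_left
  have hsub2 : p.2 ⊆ Finset.Ico (q-i) (q+i) := by rw [← hun]; exact Finset.subset_union_right
  have hbd1 : ∀ x ∈ p.1, x < q + p.1.card := by
    intro x hx; rw [hc1]; exact (Finset.mem_Ico.mp (hsub1 hx)).2
  have hbd2 : ∀ x ∈ p.2, x < q + p.2.card := by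
    intro x hx; rw [hc2]; exact (Finset.mem_Ico.mp (hsub2 hx)).2
  rw [map_mul]
  by_cases hcv : j ∈ p.2 ∨ (1 ≤ j ∧ j - 1 ∈ p.2)
  · have hcm : ¬ (j ∈ p.1 ∨ (1 ≤ j ∧ j - 1 ∈ p.1)) := by
      intro hcm
      apply hnC
      rcases hcv with h | h <;> rcases hcm with h' | h'
      · exact absurd h (fun hh => Finset.disjoint_left.mp hdis h' hh)
      · exact Or.inl ⟨h, h'.1, h'.2⟩
      · exact Or.inr ⟨h', h.1, h.2⟩
      · exact absurd h'.2 (fun hh => Finset.disjoint_left.mp hdis hh h.2)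
    push_neg at hcm
    rw [d_sIter_zero R hR q j hq1 p.1 hbd1 hcm.1
      (by rcases Nat.eq_zero_or_pos j with h0 | h0
          · exact Or.inl h0
          · exact Or.inr (hcm.2 h0))
      (by omega) (q+i) pfd z hz, mul_zero]
  · push_neg at hcv
    rw [d_sIter_zero R hR q j hq1 p.2 hbd2 hcv.1
      (by rcases Nat.eq_zero_or_pos j with h0 | h0
          · exact Or.inl h0
          · exact Or.inr (hcv.2 h0))
      (by omega) (q+i) pfc z hz, zero_mul]
theorem stmt_0' (R : SAlg) (hR : R.IsSimplicial) (q i : ℕ) (h2 : 2 ≤ i) (hiq : i ≤ q)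
    (z : R.X q) (hz : ∀ j ≤ q, R.d q j z = 0) :
    ∀ j ≤ q + i, R.d (q+i) j (deltaOp R q i z) = 0 := by
  classical
  intro j hj
  unfold deltaOp
  rw [map_sum]
  refine Finset.sum_involution
    (fun p _ => if h : Cnd j p.1 then ⟨gp q i j p.1, gp_mem h2 hiq p.2 h⟩ else p)
    ?_ ?_ (fun a _ => Finset.mem_attach _ _) ?_
  · intro a ha
    by_cases hC : Cnd j a.1
    · rw [dif_pos hC]
      dsimp only
      rw [swap_term R hR h2 hiq j z a.2 hC
        (by rw [length_sortAsc, ((deltaSet_mem_iff.mp (gp_mem h2 hiq a.2 hC)).2.1 :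
            (gp q i j a.1).2.card = i)])
        (by rw [length_sortAsc, ((deltaSet_mem_iff.mp (gp_mem h2 hiq a.2 hC)).1 :
            (gp q i j a.1).1.card = i)])
        (by rw [length_sortAsc, deltaSet_card₂ a.2])
        (by rw [length_sortAsc, deltaSet_card₁ a.2])]
      exact char2 R _
    · rw [dif_neg hC, zero_term R hR h2 hiq j hj z hz a.2 hC _ _, add_zero]
  · intro a ha hne
    by_cases hC : Cnd j a.1
    · rw [dif_pos hC]
      intro h
      exact gp_ne h2 hiq a.2 hC (congrArg Subtype.val h)
    · exact absurd (zero_term R hR h2 hiq j hj z hz a.2 hC _ _) hne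
  · intro a ha
    by_cases hC : Cnd j a.1
    · rw [dif_pos hC]
      dsimp only
      have hC2 : Cnd j ((⟨gp q i j a.1, gp_mem h2 hiq a.2 hC⟩ :
          {x // x ∈ deltaSet q i}).1) := gp_cnd h2 hiq a.2 hC
      rw [dif_pos hC2]
      exact Subtype.ext (gp_invol h2 hiq a.2 hC)
    · rw [dif_neg hC, dif_neg hC]

theorem stmt_0 (R : SAlg) (hR : R.IsSimplicial) (q i : ℕ) (h2 : 2 ≤ i) (hiq : i ≤ q)
    (z : R.X q) (hz : ∀ j ≤ q, R.d q j z = 0) :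
    ∀ j ≤ q + i, R.d (q+i) j (deltaOp R q i z) = 0 := by
  exact stmt_0' R hR q i h2 hiq z hz
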